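/- Let S be a real m×n matrix, Σ a symmetric m×m matrix, μ, Y₁,…,Y_L ∈ ℝ^m, W = (1/L)·Σᵢ(Yᵢ−μ)(Yᵢ−μ)ᵀ, M_p = S·diag(p)·Sᵀ + Σ, and Φ(p) = (1/L)·Σᵢ(Yᵢ−μ)ᵀM_p⁻¹(Yᵢ−μ) + log|det M_p|. If p₀ ∈ ℝⁿ is such that M_{p₀} is positive definite, then Φ is differentiable at p₀ and its directional derivative in direction a ∈ ℝⁿ equals trace(Sᵀ·M_{p₀}⁻¹·(I − W·M_{p₀}⁻¹)·S·diag(a)). -/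

import Mathlib

open Matrix

/-- The covariance matrix `M_p = S · diag p · Sᵀ + Σ`. -/
noncomputable def covMat {m n : ℕ} (S : Matrix (Fin m) (Fin n) ℝ)
    (Sig : Matrix (Fin m) (Fin m) ℝ) (p : Fin n → ℝ) : Matrix (Fin m) (Fin m) ℝ :=
  S * Matrix.diagonal p * Sᵀ + Sig

/-- The negative log-likelihood objective
`Φ(p) = (1/L)·Σᵢ (Yᵢ−μ)ᵀ M_p⁻¹ (Yᵢ−μ) + log|det M_p|`. -/
noncomputable def mlObjective {m n : ℕ} (S : Matrix (Fin m) (Fin n) ℝ)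
    (Sig : Matrix (Fin m) (Fin m) ℝ) (L : ℕ) (μ : Fin m → ℝ)
    (Y : Fin L → Fin m → ℝ) (p : Fin n → ℝ) : ℝ :=
  (1 / (L : ℝ)) * ∑ i, (Y i - μ) ⬝ᵥ ((covMat S Sig p)⁻¹ *ᵥ (Y i - μ)) +
    Real.log |(covMat S Sig p).det|

/-- The empirical covariance `W = (1/L)·Σᵢ (Yᵢ−μ)(Yᵢ−μ)ᵀ`. -/
noncomputable def empCov {m : ℕ} (L : ℕ) (μ : Fin m → ℝ)
    (Y : Fin L → Fin m → ℝ) : Matrix (Fin m) (Fin m) ℝ :=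
  (1 / (L : ℝ)) • ∑ i, Matrix.of fun a b => (Y i a - μ a) * (Y i b - μ b)

attribute [local instance] Matrix.linftyOpNormedAddCommGroup Matrix.linftyOpNormedSpace
  Matrix.linftyOpNormedRing Matrix.linftyOpNormedAlgebra

namespace Stmt6Aux

variable {k : ℕ}

/-- entry of a matrix as a continuous linear map -/
noncomputable def entryCLM (i j : Fin k) : Matrix (Fin k) (Fin k) ℝ →L[ℝ] ℝ :=
  LinearMap.toContinuousLinearMap
    { toFun := fun M => M i j
      map_add' := fun _ _ => rfl
      map_smul' := fun _ _ => rfl }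

noncomputable def traceCLM : Matrix (Fin k) (Fin k) ℝ →L[ℝ] ℝ :=
  LinearMap.toContinuousLinearMap (Matrix.traceLinearMap (Fin k) ℝ ℝ)

@[simp] lemma entryCLM_apply (i j : Fin k) (M : Matrix (Fin k) (Fin k) ℝ) :
    entryCLM i j M = M i j := rfl

@[simp] lemma traceCLM_apply (M : Matrix (Fin k) (Fin k) ℝ) :
    traceCLM M = M.trace := rfl

noncomputable def mulLeftCLM (A : Matrix (Fin k) (Fin k) ℝ) :
    Matrix (Fin k) (Fin k) ℝ →L[ℝ] Matrix (Fin k) (Fin k) ℝ :=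
  LinearMap.toContinuousLinearMap (LinearMap.mulLeft ℝ A)

@[simp] lemma mulLeftCLM_apply (A M : Matrix (Fin k) (Fin k) ℝ) :
    mulLeftCLM A M = A * M := rfl

lemma hasFDerivAt_det_aux (A : Matrix (Fin k) (Fin k) ℝ) :
    HasFDerivAt Matrix.det
      (∑ σ : Equiv.Perm (Fin k), ((Equiv.Perm.sign σ : ℤ) : ℝ) •
        ∑ i, (∏ j ∈ Finset.univ.erase i, A (σ j) j) • entryCLM (σ i) i) A := by
  have h : (Matrix.det : Matrix (Fin k) (Fin k) ℝ → ℝ) = fun M =>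
      ∑ σ : Equiv.Perm (Fin k), ((Equiv.Perm.sign σ : ℤ) : ℝ) * ∏ i, M (σ i) i := by
    funext M; rw [Matrix.det_apply']
  rw [h]
  apply HasFDerivAt.fun_sum
  intro σ _
  have hp : HasFDerivAt (fun M : Matrix (Fin k) (Fin k) ℝ => ∏ i, M (σ i) i)
      (∑ i, (∏ j ∈ Finset.univ.erase i, A (σ j) j) • entryCLM (σ i) i) A := by
    have h0 := HasFDerivAt.finset_prod (x := A)
      (u := Finset.univ) (g := fun i M => M (σ i) i)
      (g' := fun i => entryCLM (σ i) i)
      (fun i _ => (entryCLM (σ i) i).hasFDerivAt)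
    exact h0
  have h0 := hp.const_mul (((Equiv.Perm.sign σ : ℤ) : ℝ))
  exact h0

lemma hasFDerivAt_det_one :
    HasFDerivAt Matrix.det (traceCLM : Matrix (Fin k) (Fin k) ℝ →L[ℝ] ℝ) 1 := by
  have h := hasFDerivAt_det_aux (1 : Matrix (Fin k) (Fin k) ℝ)
  convert h using 1
  ext H
  simp only [ContinuousLinearMap.coe_sum', Finset.sum_apply, ContinuousLinearMap.coe_smul',
    Pi.smul_apply, entryCLM_apply, smul_eq_mul, traceCLM_apply]
  rw [Finset.sum_eq_single (1 : Equiv.Perm (Fin k))]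
  · simp [Matrix.trace, Matrix.diag, Matrix.one_apply]
  · intro σ _ hσ
    have : ∀ i : Fin k, ∏ j ∈ Finset.univ.erase i, (1 : Matrix (Fin k) (Fin k) ℝ) (σ j) j = 0 := by
      intro i
      obtain ⟨j₀, hj₀⟩ : ∃ j, σ j ≠ j := by
        by_contra hcon
        push_neg at hcon
        exact hσ (Equiv.ext fun j => hcon j)
      obtain ⟨j, hji, hj⟩ : ∃ j, j ≠ i ∧ σ j ≠ j := by
        rcases eq_or_ne j₀ i with rfl | hne
        · refine ⟨σ j₀, hj₀, fun hc => hj₀ (σ.injective hc)⟩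
        · exact ⟨j₀, hne, hj₀⟩
      apply Finset.prod_eq_zero (Finset.mem_erase.mpr ⟨hji, Finset.mem_univ j⟩)
      simp [Matrix.one_apply, hj]
    simp [this]
  · simp

lemma hasFDerivAt_det (A : Matrix (Fin k) (Fin k) ℝ) (hA : IsUnit A.det) :
    HasFDerivAt Matrix.det (A.det • ((traceCLM).comp (mulLeftCLM A⁻¹))) A := by
  have hdet : A.det ≠ 0 := by
    intro h; rw [h] at hA; exact (by simpa using hA)
  have hinv : A⁻¹ * A = 1 := Matrix.nonsing_inv_mul A hA
  have hfun : (Matrix.det : Matrix (Fin k) (Fin k) ℝ → ℝ)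
      = fun X => A.det * (A⁻¹ * X).det := by
    funext X
    rw [Matrix.det_mul, Matrix.det_nonsing_inv, Ring.inverse_eq_inv']
    field_simp
  have houter : HasFDerivAt (fun Y : Matrix (Fin k) (Fin k) ℝ => A.det * Y.det)
      (A.det • (traceCLM : Matrix (Fin k) (Fin k) ℝ →L[ℝ] ℝ)) ((mulLeftCLM A⁻¹) A) := by
    rw [show (mulLeftCLM A⁻¹) A = 1 from hinv]
    have h0 := (hasFDerivAt_det_one (k := k)).const_mul A.det
    exact h0
  have hg := houter.comp A (mulLeftCLM A⁻¹).hasFDerivAt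
  erw [ContinuousLinearMap.smul_comp] at hg
  exact hg.congr_of_eventuallyEq (Filter.Eventually.of_forall fun X => congrFun hfun X)

lemma hasFDerivAt_matrix_inv (A : Matrix (Fin k) (Fin k) ℝ) (hA : IsUnit A.det) :
    HasFDerivAt (Inv.inv : Matrix (Fin k) (Fin k) ℝ → Matrix (Fin k) (Fin k) ℝ)
      (-(ContinuousLinearMap.mulLeftRight ℝ _ A⁻¹ A⁻¹)) A := by
  have hAu : IsUnit A := (Matrix.isUnit_iff_isUnit_det A).mpr hA
  have h := hasFDerivAt_ringInverse (𝕜 := ℝ) hAu.unit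
  have hfun : (Ring.inverse : Matrix (Fin k) (Fin k) ℝ → Matrix (Fin k) (Fin k) ℝ)
      = Inv.inv := by
    funext X; exact (Matrix.nonsing_inv_eq_ringInverse X).symm
  rw [hfun] at h
  have hcoe : ((hAu.unit⁻¹ : (Matrix (Fin k) (Fin k) ℝ)ˣ) : Matrix (Fin k) (Fin k) ℝ) = A⁻¹ := by
    rw [Matrix.coe_units_inv, IsUnit.unit_spec]
  rw [IsUnit.unit_spec] at h
  rw [hcoe] at h
  exact h

lemma dot_eq_trace {m : ℕ} (x : Fin m → ℝ) (N : Matrix (Fin m) (Fin m) ℝ) :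
    x ⬝ᵥ (N *ᵥ x) = (N * Matrix.of fun a b => x a * x b).trace := by
  simp only [Matrix.trace, Matrix.diag, Matrix.mul_apply, Matrix.of_apply, dotProduct,
    Matrix.mulVec, Finset.mul_sum]
  apply Finset.sum_congr rfl; intros
  apply Finset.sum_congr rfl; intros
  ring

noncomputable def quadCLM {m : ℕ} (L : ℕ) (x : Fin L → Fin m → ℝ) :
    Matrix (Fin m) (Fin m) ℝ →L[ℝ] ℝ :=
  LinearMap.toContinuousLinearMap
    { toFun := fun N => (1 / (L : ℝ)) * ∑ i, x i ⬝ᵥ (N *ᵥ x i)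
      map_add' := by
        intro M N
        simp [Matrix.add_mulVec, dotProduct_add, Finset.sum_add_distrib, mul_add]
      map_smul' := by
        intro c N
        simp only [Matrix.smul_mulVec, dotProduct_smul, smul_eq_mul,
          RingHom.id_apply, ← Finset.mul_sum]
        ring }

@[simp] lemma quadCLM_apply {m : ℕ} (L : ℕ) (x : Fin L → Fin m → ℝ)
    (N : Matrix (Fin m) (Fin m) ℝ) :
    quadCLM L x N = (1 / (L : ℝ)) * ∑ i, x i ⬝ᵥ (N *ᵥ x i) := rfl

noncomputable def dirCLM {m n : ℕ} (S : Matrix (Fin m) (Fin n) ℝ) :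
    (Fin n → ℝ) →L[ℝ] Matrix (Fin m) (Fin m) ℝ :=
  LinearMap.toContinuousLinearMap
    { toFun := fun a => S * Matrix.diagonal a * Sᵀ
      map_add' := by
        intro a b
        show S * Matrix.diagonal (a + b) * Sᵀ
          = S * Matrix.diagonal a * Sᵀ + S * Matrix.diagonal b * Sᵀ
        have hd : Matrix.diagonal (a + b) = Matrix.diagonal a + Matrix.diagonal b := by
          rw [Matrix.diagonal_add]; rfl
        rw [hd, Matrix.mul_add, Matrix.add_mul]
      map_smul' := by
        intro c a
        show S * Matrix.diagonal (c • a) * Sᵀ = c • (S * Matrix.diagonal a * Sᵀ)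
        rw [Matrix.diagonal_smul, Matrix.mul_smul, Matrix.smul_mul] }

@[simp] lemma dirCLM_apply {m n : ℕ} (S : Matrix (Fin m) (Fin n) ℝ) (a : Fin n → ℝ) :
    dirCLM S a = S * Matrix.diagonal a * Sᵀ := rfl

end Stmt6Aux

open Stmt6Aux

/-- If `M_{p₀}` is positive definite then `Φ` is
differentiable at `p₀`, and its directional derivative in direction `a`
equals `trace (Sᵀ M_{p₀}⁻¹ (I − W M_{p₀}⁻¹) S diag(a))`. -/
theorem stmt6 {m n : ℕ} (S : Matrix (Fin m) (Fin n) ℝ)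
    (Sig : Matrix (Fin m) (Fin m) ℝ) (hSig : Sig.IsSymm)
    (L : ℕ) (μ : Fin m → ℝ) (Y : Fin L → Fin m → ℝ)
    (p₀ : Fin n → ℝ) (hpos : (covMat S Sig p₀).PosDef) :
    ∃ f : (Fin n → ℝ) →L[ℝ] ℝ,
      HasFDerivAt (mlObjective S Sig L μ Y) f p₀ ∧
        ∀ a : Fin n → ℝ,
          f a =
            (Sᵀ * (covMat S Sig p₀)⁻¹ *
              (1 - empCov L μ Y * (covMat S Sig p₀)⁻¹) * S *
              Matrix.diagonal a).trace := by
  classical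
  set x : Fin L → Fin m → ℝ := fun i => Y i - μ with hx
  set A := covMat S Sig p₀ with hAdef
  have hdetpos : 0 < A.det := hpos.det_pos
  have hdetne : A.det ≠ 0 := ne_of_gt hdetpos
  have hdet : IsUnit A.det := isUnit_iff_ne_zero.mpr hdetne
  have hM : HasFDerivAt (fun p => covMat S Sig p) (dirCLM S) p₀ := by
    have h1 : (fun p => covMat S Sig p) = fun p => dirCLM S p + Sig := by
      funext p; simp [covMat]
    rw [h1]
    exact (dirCLM S).hasFDerivAt.add_const Sig
  have hinvD := hasFDerivAt_matrix_inv A hdet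
  have hquad : HasFDerivAt (fun M : Matrix (Fin m) (Fin m) ℝ => quadCLM L x M⁻¹)
      ((quadCLM L x).comp (-(ContinuousLinearMap.mulLeftRight ℝ _ A⁻¹ A⁻¹))) A :=
    (quadCLM L x).hasFDerivAt.comp A hinvD
  have hlog : HasFDerivAt (fun M : Matrix (Fin m) (Fin m) ℝ => Real.log |M.det|)
      ((A.det)⁻¹ • (A.det • ((traceCLM).comp (mulLeftCLM A⁻¹)))) A := by
    have h1 : (fun M : Matrix (Fin m) (Fin m) ℝ => Real.log |M.det|)
        = fun M => Real.log M.det := by funext M; rw [Real.log_abs]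
    rw [h1]
    exact (Real.hasDerivAt_log hdetne).comp_hasFDerivAt A (hasFDerivAt_det A hdet)
  refine ⟨(((quadCLM L x).comp (-(ContinuousLinearMap.mulLeftRight ℝ _ A⁻¹ A⁻¹)) : Matrix (Fin m) (Fin m) ℝ →L[ℝ] ℝ)
      + (A.det)⁻¹ • (A.det • ((traceCLM).comp (mulLeftCLM A⁻¹)))).comp (dirCLM S), ?_, ?_⟩
  · have hcomp := (hquad.add hlog).comp p₀ hM
    have heq : mlObjective S Sig L μ Y = (fun M : Matrix (Fin m) (Fin m) ℝ =>
        quadCLM L x M⁻¹ + Real.log |M.det|) ∘ (fun p => covMat S Sig p) := rfl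
    rw [heq]
    exact hcomp
  · intro a
    simp only [ContinuousLinearMap.coe_comp', Function.comp_apply,
      ContinuousLinearMap.add_apply, ContinuousLinearMap.coe_smul', Pi.smul_apply,
      ContinuousLinearMap.comp_apply, ContinuousLinearMap.neg_apply,
      ContinuousLinearMap.mulLeftRight_apply, dirCLM_apply, quadCLM_apply,
      traceCLM_apply, mulLeftCLM_apply, smul_eq_mul]
    set B := S * Matrix.diagonal a * Sᵀ with hB
    set W := empCov L μ Y with hW
    have h2 : A.det⁻¹ * (A.det * (A⁻¹ * B).trace) = (A⁻¹ * B).trace := by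
      field_simp
    have h1 : (1 / (L : ℝ)) * ∑ i, x i ⬝ᵥ ((-(A⁻¹ * B * A⁻¹)) *ᵥ x i)
        = -(((A⁻¹ * B * A⁻¹) * W).trace) := by
      rw [hW]
      rw [show empCov L μ Y = (1 / (L : ℝ)) • ∑ i, Matrix.of fun c d => x i c * x i d from rfl]
      rw [Matrix.mul_smul, Matrix.trace_smul, Matrix.mul_sum, Matrix.trace_sum]
      simp only [Matrix.neg_mulVec, dotProduct_neg, ← dot_eq_trace, smul_eq_mul]
      rw [Finset.sum_neg_distrib]
      ring
    change (1 / (L : ℝ)) * ∑ i, x i ⬝ᵥ ((-(A⁻¹ * B * A⁻¹)) *ᵥ x i) + _ = _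
    rw [h1, h2]
    have e1 : A⁻¹ * B = (A⁻¹ * S * Matrix.diagonal a) * Sᵀ := by
      rw [hB]; simp only [Matrix.mul_assoc]
    have hcycle1 : (A⁻¹ * B).trace = (Sᵀ * A⁻¹ * S * Matrix.diagonal a).trace := by
      rw [e1, Matrix.trace_mul_comm]
      congr 1
      simp only [Matrix.mul_assoc]
    have e2 : (A⁻¹ * B * A⁻¹) * W = (A⁻¹ * S * Matrix.diagonal a) * (Sᵀ * A⁻¹ * W) := by
      rw [hB]; simp only [Matrix.mul_assoc]
    have hcycle2 : ((A⁻¹ * B * A⁻¹) * W).trace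
        = (Sᵀ * A⁻¹ * (W * A⁻¹) * S * Matrix.diagonal a).trace := by
      rw [e2, Matrix.trace_mul_comm]
      congr 1
      simp only [Matrix.mul_assoc]
    have hRHS : (Sᵀ * A⁻¹ * (1 - W * A⁻¹) * S * Matrix.diagonal a).trace
        = (Sᵀ * A⁻¹ * S * Matrix.diagonal a).trace
          - (Sᵀ * A⁻¹ * (W * A⁻¹) * S * Matrix.diagonal a).trace := by
      rw [Matrix.mul_sub, Matrix.mul_one, Matrix.sub_mul, Matrix.sub_mul, Matrix.trace_sub]
    rw [hcycle1, hcycle2, hRHS]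
    ring
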